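/- With X, H^b_i, H̃^b_i, and H defined as in the marker construction (H = all-marker hypothesis together with all padded classes H̃^b = H̃^b_1 ∪ H̃^b_2), the class H is NOT generatable in the limit with replay: for every generator G there exist a hypothesis h* ∈ H and an enumeration with replay for h* and G on which G outputs an element outside supp(h*)\{x_1,...,x_t} at infinitely many times t. -/

import Mathlib

/-- The domain X = ℤ ∪ {*^n : n ∈ ℕ}: `Sum.inl z` is the integer `z`,
and `Sum.inr n` (used only for `n ≥ 1`) is the marker string `*^n`. -/
abbrev XM : Type := ℤ ⊕ ℕ

def ik (z : ℤ) : XM := Sum.inl z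
def mk (n : ℕ) : XM := Sum.inr n

def markersUpTo (b : ℕ) : Set XM := {p | ∃ k : ℕ, 1 ≤ k ∧ k ≤ b ∧ p = mk k}

def Htilde1 (b : ℕ) : Set (Set XM) :=
  {S | ∃ (A : Set ℤ) (j : ℤ), (b : ℤ) < j ∧
    S = ({ik (b : ℤ)} ∪ (ik '' A) ∪ {p | ∃ z : ℤ, j < z ∧ p = ik z}) ∪ markersUpTo b}

def Htilde2 (b : ℕ) : Set (Set XM) :=
  {S | ∃ A : Set ℤ, (b : ℤ) ∉ A ∧
    S = ({p | ∃ z : ℤ, z < (b : ℤ) ∧ p = ik z} ∪ (ik '' A)) ∪ markersUpTo b}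

def allMarkers : Set XM := {p | ∃ n : ℕ, 1 ≤ n ∧ p = mk n}

def HM : Set (Set XM) := {allMarkers} ∪ ⋃ b : ℕ, (Htilde1 b ∪ Htilde2 b)

def Out {X : Type*} (G : List X → X) (x : ℕ → X) (s : ℕ) : X :=
  G ((List.range s).map x)

/-- `x` is a replay sequence for `h` and `G`. -/
def ReplaySeq {X : Type*} (h : Set X) (G : List X → X) (x : ℕ → X) : Prop :=
  ∀ t, x t ∈ h ∨ ∃ s, 1 ≤ s ∧ s ≤ t ∧ x t = Out G x s

-- ===== auxiliary development =====

def rgIsMk : XM → Prop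
  | Sum.inl _ => False
  | Sum.inr n => 1 ≤ n

instance decRgIsMk : DecidablePred rgIsMk := fun v =>
  match v with
  | Sum.inl _ => isFalse (fun h => h)
  | Sum.inr n => (Nat.decLe 1 n : Decidable (1 ≤ n))

lemma rgIsMk_iff {v : XM} : rgIsMk v ↔ ∃ n, 1 ≤ n ∧ v = mk n := by
  cases v with
  | inl z =>
      simp only [rgIsMk, mk, false_iff]
      rintro ⟨n, _, h⟩; exact absurd h (by simp)
  | inr n =>
      simp only [rgIsMk, mk]
      constructor
      · intro h; exact ⟨n, h, rfl⟩
      · rintro ⟨n', h1, h⟩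
        obtain rfl : n = n' := by simpa using h
        exact h1

lemma rgMk_spec {v : XM} (h : rgIsMk v) :
    v = mk (match v with | Sum.inl _ => 0 | Sum.inr n => n) ∧
    1 ≤ (match v with | Sum.inl _ => 0 | Sum.inr n => n) := by
  cases v with
  | inl z => exact h.elim
  | inr n => exact ⟨rfl, h⟩

def rgMIdx : XM → ℕ
  | Sum.inl _ => 0
  | Sum.inr n => n

def rgFMk (l : List XM) (s : ℕ) : Prop :=
  s % 2 = 1 ∧ rgIsMk (l.getD s (ik 0)) ∧ ∀ r < s, l.getD r (ik 0) ≠ l.getD s (ik 0)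

instance decRgFMk (l : List XM) : DecidablePred (rgFMk l) := fun s => by
  unfold rgFMk; infer_instance

def rgEta (k : ℕ) : ℤ := if k % 2 = 0 then (k / 2 : ℤ) else -(((k / 2 : ℕ) : ℤ) + 1)

def rgEtaInv (z : ℤ) : ℕ := if 0 ≤ z then 2 * z.toNat else 2 * (-z - 1).toNat + 1

lemma rgEta_inv (z : ℤ) : rgEta (rgEtaInv z) = z := by
  unfold rgEta rgEtaInv
  by_cases h : 0 ≤ z
  · rw [if_pos h, if_pos (by omega)]
    omega
  · rw [if_neg h, if_neg (by omega)]
    have h2 : (2 * (-z - 1).toNat + 1) / 2 = (-z - 1).toNat := by omega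
    rw [h2]
    omega

def rgPlan1 (t : ℕ) : XM := mk (t / 2 + 1)

def rgPlan2 (τ m t : ℕ) : XM :=
  if (t - τ - 1) / 2 < m - 1 then mk ((t - τ - 1) / 2 + 1)
  else ik (rgEta ((t - τ - 1) / 2 - (m - 1)))

lemma rgPlan2_at (τ m k : ℕ) :
    rgPlan2 τ m (τ + 1 + 2 * k) =
      if k < m - 1 then mk (k + 1) else ik (rgEta (k - (m - 1))) := by
  unfold rgPlan2
  have h : (τ + 1 + 2 * k - τ - 1) / 2 = k := by omega
  rw [h]

instance rgDecMem (v : XM) (l : List XM) : Decidable (v ∈ l) :=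
  decidable_of_iff (∃ x ∈ l, v = x) (by simp [eq_comm])

private def rgDecExLt (P : ℕ → Prop) [DecidablePred P] : (n : ℕ) → Decidable (∃ s, s < n ∧ P s)
  | 0 => isFalse (by rintro ⟨s, h, _⟩; omega)
  | n + 1 =>
    match rgDecExLt P n with
    | isTrue h => isTrue (by obtain ⟨s, hs, hp⟩ := h; exact ⟨s, by omega, hp⟩)
    | isFalse h =>
      if hp : P n then isTrue ⟨n, by omega, hp⟩
      else isFalse (by
        rintro ⟨s, hs, hps⟩
        rcases Nat.lt_succ_iff_lt_or_eq.mp hs with h' | rfl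
        · exact h ⟨s, h', hps⟩
        · exact hp hps)

instance rgDecExFMk (l : List XM) : Decidable (∃ s, s < l.length ∧ rgFMk l s) :=
  rgDecExLt _ _

variable (G : List XM → XM)

def rgStep (l : List XM) : XM :=
  if l.length % 2 = 1 then G l
  else if htr : ∃ s, s < l.length ∧ rgFMk l s then
    (if rgPlan2 (Nat.find htr) (rgMIdx (l.getD (Nat.find htr) (ik 0))) l.length ∈ l
        ∨ rgPlan2 (Nat.find htr) (rgMIdx (l.getD (Nat.find htr) (ik 0))) l.length
            = ik (rgMIdx (l.getD (Nat.find htr) (ik 0)))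
      then G (l.take 1)
      else rgPlan2 (Nat.find htr) (rgMIdx (l.getD (Nat.find htr) (ik 0))) l.length)
  else
    (if rgPlan1 l.length ∈ l then G (l.take 1) else rgPlan1 l.length)

def rgPfx : ℕ → List XM
  | 0 => []
  | t + 1 => rgPfx t ++ [rgStep G (rgPfx t)]

def rgX (t : ℕ) : XM := rgStep G (rgPfx G t)

lemma rgPfx_length (t : ℕ) : (rgPfx G t).length = t := by
  induction t with
  | zero => rfl
  | succ n ih => simp [rgPfx, ih]

lemma rgPfx_eq_map (t : ℕ) : rgPfx G t = (List.range t).map (rgX G) := by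
  induction t with
  | zero => rfl
  | succ n ih => rw [List.range_succ, List.map_append]; simp [rgPfx, ih, rgX]

lemma rgOut_eq (s : ℕ) : Out G (rgX G) s = G (rgPfx G s) := by
  rw [Out, ← rgPfx_eq_map]

lemma rgMem_pfx {v : XM} {t : ℕ} : v ∈ rgPfx G t ↔ ∃ r, r < t ∧ rgX G r = v := by
  rw [rgPfx_eq_map]
  simp [List.mem_map]

lemma rgPfx_getD {r t : ℕ} (h : r < t) (d : XM) : (rgPfx G t).getD r d = rgX G r := by
  have h1 : r < ((List.range t).map (rgX G)).length := by simpa using h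
  rw [rgPfx_eq_map, List.getD_eq_getElem _ _ h1]
  simp

lemma rgX_odd {t : ℕ} (h : t % 2 = 1) : rgX G t = G (rgPfx G t) := by
  rw [rgX, rgStep, if_pos (by rw [rgPfx_length]; exact h)]

lemma rgOut_odd {t : ℕ} (h : t % 2 = 1) : Out G (rgX G) t = rgX G t := by
  rw [rgOut_eq, rgX_odd G h]

lemma rgTake_one {t : ℕ} (h : 1 ≤ t) : (rgPfx G t).take 1 = rgPfx G 1 := by
  rw [rgPfx_eq_map, rgPfx_eq_map, ← List.map_take, List.take_range]
  congr 2
  omega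

def rgPtrig (s : ℕ) : Prop :=
  s % 2 = 1 ∧ rgIsMk (rgX G s) ∧ ∀ r < s, rgX G r ≠ rgX G s

lemma rgFMk_iff {s t : ℕ} (h : s < t) : rgFMk (rgPfx G t) s ↔ rgPtrig G s := by
  unfold rgFMk rgPtrig
  rw [rgPfx_getD G h]
  constructor
  · rintro ⟨h1, h2, h3⟩
    refine ⟨h1, h2, fun r hr => ?_⟩
    have := h3 r hr
    rwa [rgPfx_getD G (lt_trans hr h)] at this
  · rintro ⟨h1, h2, h3⟩
    refine ⟨h1, h2, fun r hr => ?_⟩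
    rw [rgPfx_getD G (lt_trans hr h)]
    exact h3 r hr

lemma rgX_even0 {t : ℕ} (ht : t % 2 = 0) (hno : ¬ ∃ s, s < t ∧ rgPtrig G s) :
    rgX G t = rgPlan1 t ∨
      ((∃ r, r < t ∧ rgX G r = rgPlan1 t) ∧ rgX G t = rgX G 1 ∧ 1 ≤ t) := by
  have hlen : (rgPfx G t).length = t := rgPfx_length G t
  have hnex : ¬ ∃ s, s < (rgPfx G t).length ∧ rgFMk (rgPfx G t) s := by
    rw [hlen]
    rintro ⟨s, hs, hf⟩
    exact hno ⟨s, hs, (rgFMk_iff G hs).mp hf⟩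
  have h1 : rgX G t =
      (if rgPlan1 (rgPfx G t).length ∈ rgPfx G t then G ((rgPfx G t).take 1)
       else rgPlan1 (rgPfx G t).length) := by
    rw [rgX, rgStep, if_neg (by rw [hlen]; omega), dif_neg hnex]
  rw [hlen] at h1
  by_cases hmem : rgPlan1 t ∈ rgPfx G t
  · rw [if_pos hmem] at h1
    have hr := (rgMem_pfx G).mp hmem
    have ht1 : 1 ≤ t := by obtain ⟨r, hr', _⟩ := hr; omega
    refine Or.inr ⟨hr, ?_, ht1⟩
    rw [h1, rgTake_one G ht1, ← rgX_odd G (by norm_num)]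
  · rw [if_neg hmem] at h1
    exact Or.inl h1

lemma rgX_evenT {τ t : ℕ} (ht : t % 2 = 0) (hτ : rgPtrig G τ) (hτt : τ < t)
    (hmin : ∀ s, s < τ → ¬ rgPtrig G s) :
    (¬ (rgPlan2 τ (rgMIdx (rgX G τ)) t ∈ rgPfx G t
          ∨ rgPlan2 τ (rgMIdx (rgX G τ)) t = ik (rgMIdx (rgX G τ)))
        ∧ rgX G t = rgPlan2 τ (rgMIdx (rgX G τ)) t) ∨
    ((rgPlan2 τ (rgMIdx (rgX G τ)) t ∈ rgPfx G t
          ∨ rgPlan2 τ (rgMIdx (rgX G τ)) t = ik (rgMIdx (rgX G τ)))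
        ∧ rgX G t = rgX G 1) := by
  have hlen : (rgPfx G t).length = t := rgPfx_length G t
  have hex : ∃ s, s < (rgPfx G t).length ∧ rgFMk (rgPfx G t) s := by
    rw [hlen]; exact ⟨τ, hτt, (rgFMk_iff G hτt).mpr hτ⟩
  have hfind : Nat.find hex = τ := by
    rw [Nat.find_eq_iff]
    constructor
    · rw [hlen]; exact ⟨hτt, (rgFMk_iff G hτt).mpr hτ⟩
    · rintro s hs ⟨hst, hf⟩
      rw [hlen] at hst
      exact hmin s hs ((rgFMk_iff G hst).mp hf)
  have h1 : rgX G t =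
      (if rgPlan2 (Nat.find hex) (rgMIdx ((rgPfx G t).getD (Nat.find hex) (ik 0))) (rgPfx G t).length ∈ rgPfx G t
          ∨ rgPlan2 (Nat.find hex) (rgMIdx ((rgPfx G t).getD (Nat.find hex) (ik 0))) (rgPfx G t).length
              = ik (rgMIdx ((rgPfx G t).getD (Nat.find hex) (ik 0)))
       then G ((rgPfx G t).take 1)
       else rgPlan2 (Nat.find hex) (rgMIdx ((rgPfx G t).getD (Nat.find hex) (ik 0))) (rgPfx G t).length) := by
    rw [rgX, rgStep, if_neg (by rw [hlen]; omega), dif_pos hex]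
  rw [hfind, rgPfx_getD G hτt, hlen] at h1
  by_cases hcond : rgPlan2 τ (rgMIdx (rgX G τ)) t ∈ rgPfx G t
      ∨ rgPlan2 τ (rgMIdx (rgX G τ)) t = ik (rgMIdx (rgX G τ))
  · rw [if_pos hcond] at h1
    refine Or.inr ⟨hcond, ?_⟩
    rw [h1, rgTake_one G (by omega), ← rgX_odd G (by norm_num)]
  · rw [if_neg hcond] at h1
    exact Or.inl ⟨hcond, h1⟩

lemma rgReplay_odd {t : ℕ} (h : t % 2 = 1) :
    ∃ s, 1 ≤ s ∧ s ≤ t ∧ rgX G t = Out G (rgX G) s :=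
  ⟨t, by omega, le_rfl, (rgOut_odd G h).symm⟩

lemma rgReplay_fill {t : ℕ} (h : 1 ≤ t) (he : rgX G t = rgX G 1) :
    ∃ s, 1 ≤ s ∧ s ≤ t ∧ rgX G t = Out G (rgX G) s :=
  ⟨1, le_rfl, h, by rw [he, rgOut_odd G (by norm_num)]⟩

-- phase-1 planned markers appear
lemma rgAppears0 {u : ℕ} (hno : ¬ ∃ s, s < 2 * u ∧ rgPtrig G s) :
    ∃ r, r ≤ 2 * u ∧ rgX G r = mk (u + 1) := by
  have hp : rgPlan1 (2 * u) = mk (u + 1) := by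
    unfold rgPlan1; congr 1; omega
  rcases rgX_even0 G (by omega) hno with h | ⟨⟨r, hr, he⟩, _, _⟩
  · exact ⟨2 * u, le_rfl, by rw [h, hp]⟩
  · exact ⟨r, by omega, by rw [he, hp]⟩

section WithTrigger

variable {τ : ℕ} (hτ : rgPtrig G τ) (hmin : ∀ s, s < τ → ¬ rgPtrig G s)

include hτ

lemma rgXτ_eq : rgX G τ = mk (rgMIdx (rgX G τ)) ∧ 1 ≤ rgMIdx (rgX G τ) := by
  rcases hτ with ⟨-, h2, -⟩
  cases hv : rgX G τ with
  | inl z => rw [hv] at h2; exact h2.elim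
  | inr n =>
      rw [hv] at h2
      exact ⟨rfl, h2⟩

include hmin

lemma rgBig {u : ℕ} (hu : 2 * u < τ) : u + 1 < rgMIdx (rgX G τ) := by
  set m := rgMIdx (rgX G τ) with hm
  obtain ⟨hxτ, hm1⟩ := rgXτ_eq G hτ
  by_contra hcon
  push_neg at hcon
  have h2u : 2 * (m - 1) < τ := by omega
  obtain ⟨r, hr, he⟩ := rgAppears0 G (u := m - 1)
    (by rintro ⟨s, hs, hp⟩; exact hmin s (by omega) hp)
  have hrτ : r < τ := by omega
  have : m - 1 + 1 = m := by omega
  rw [this] at he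
  exact hτ.2.2 r hrτ (by rw [he, ← hxτ])

lemma rgM2 : 2 ≤ rgMIdx (rgX G τ) := by
  have h0 : (0 : ℕ) < τ := by have := hτ.1; omega
  have := rgBig G hτ hmin (u := 0) (by omega)
  omega

-- planned phase-2 values appear (when not the pivot)
lemma rgAppearsT {k : ℕ}
    (hp : (if k < rgMIdx (rgX G τ) - 1 then mk (k + 1)
           else ik (rgEta (k - (rgMIdx (rgX G τ) - 1)))) ≠ ik (rgMIdx (rgX G τ))) :
    ∃ r, r ≤ τ + 1 + 2 * k ∧
      rgX G r = (if k < rgMIdx (rgX G τ) - 1 then mk (k + 1)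
                 else ik (rgEta (k - (rgMIdx (rgX G τ) - 1)))) := by
  set m := rgMIdx (rgX G τ) with hm
  set t := τ + 1 + 2 * k with htdef
  have ht2 : t % 2 = 0 := by have := hτ.1; omega
  have hplan : rgPlan2 τ m t = (if k < m - 1 then mk (k + 1) else ik (rgEta (k - (m - 1)))) :=
    rgPlan2_at τ m k
  rcases rgX_evenT G ht2 hτ (by omega) hmin with ⟨-, he⟩ | ⟨hc, -⟩
  · exact ⟨t, le_rfl, by rw [he, hplan]⟩
  · rw [hplan] at hc
    rcases hc with hmem | hpiv
    · obtain ⟨r, hr, he⟩ := (rgMem_pfx G).mp hmem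
      exact ⟨r, by omega, he⟩
    · exact absurd hpiv hp

lemma rgAppears_mk {n : ℕ} (h1 : 1 ≤ n) (h2 : n ≤ rgMIdx (rgX G τ) - 1) :
    ∃ r, r ≤ τ + 1 + 2 * (n - 1) ∧ rgX G r = mk n := by
  have hm2 := rgM2 G hτ hmin
  have hk : n - 1 < rgMIdx (rgX G τ) - 1 := by omega
  have := rgAppearsT G hτ hmin (k := n - 1)
    (by rw [if_pos hk]; simp [mk, ik])
  rw [if_pos hk] at this
  have hn : n - 1 + 1 = n := by omega
  rwa [hn] at this

lemma rgAppears_ik {z : ℤ} (hz : z ≠ (rgMIdx (rgX G τ) : ℤ)) :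
    ∃ r, r ≤ τ + 1 + 2 * ((rgMIdx (rgX G τ) - 1) + rgEtaInv z) ∧ rgX G r = ik z := by
  set m := rgMIdx (rgX G τ) with hm
  have hk : ¬ ((m - 1) + rgEtaInv z < m - 1) := by omega
  have heq : (m - 1) + rgEtaInv z - (m - 1) = rgEtaInv z := by omega
  have := rgAppearsT G hτ hmin (k := (m - 1) + rgEtaInv z)
    (by rw [if_neg hk, heq, rgEta_inv]; simp [ik, hz]; exact hz)
  rwa [if_neg hk, heq, rgEta_inv] at this

-- key lemma: fresh integer outputs are never fed
lemma rgNotFed {s : ℕ} (hs2 : s % 2 = 1) (hs1 : 1 < s) (hτs : τ < s)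
    (hfresh : ∀ r < s, rgX G r ≠ rgX G s) {z : ℤ} (hz : rgX G s = ik z) :
    ∀ t, t % 2 = 0 → rgX G t ≠ ik z := by
  intro t ht2 heq
  rcases lt_trichotomy t s with hlt | rfl | hgt
  · exact hfresh t hlt (by rw [heq, hz])
  · omega
  · rcases rgX_evenT G ht2 hτ (by omega) hmin with ⟨hnc, he⟩ | ⟨-, he⟩
    · apply hnc
      left
      rw [← he, heq]
      exact (rgMem_pfx G).mpr ⟨s, hgt, hz⟩
    · have h1 : rgX G 1 = ik z := by rw [← he, heq]
      exact hfresh 1 hs1 (by rw [h1, hz])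

end WithTrigger

def rgFed (z : ℤ) : Prop := ∃ t, t % 2 = 0 ∧ rgX G t = ik z

def rgA1 : Set ℤ := {z | rgFed G z}

def rgA2 (m : ℕ) : Set ℤ := {z | z ≠ (m : ℤ) ∧ rgFed G z}

def rgH1 (m : ℕ) : Set XM :=
  ({ik ((m - 1 : ℕ) : ℤ)} ∪ (ik '' rgA1 G) ∪ {p | ∃ z : ℤ, (m : ℤ) < z ∧ p = ik z})
    ∪ markersUpTo (m - 1)

def rgH2 (m : ℕ) : Set XM :=
  ({p | ∃ z : ℤ, z < (m : ℤ) ∧ p = ik z} ∪ (ik '' rgA2 G m)) ∪ markersUpTo m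

lemma rgH1_mem {m : ℕ} (hm : 1 ≤ m) : rgH1 G m ∈ HM := by
  refine Or.inr (Set.mem_iUnion.mpr ⟨m - 1, Or.inl ?_⟩)
  refine ⟨rgA1 G, (m : ℤ), ?_, rfl⟩
  exact_mod_cast Nat.sub_lt (by omega) (by omega)

lemma rgH2_mem {m : ℕ} : rgH2 G m ∈ HM := by
  refine Or.inr (Set.mem_iUnion.mpr ⟨m, Or.inr ?_⟩)
  exact ⟨rgA2 G m, fun h => h.1 rfl, rfl⟩

section WithTrigger2

variable {τ : ℕ} (hτ : rgPtrig G τ) (hmin : ∀ s, s < τ → ¬ rgPtrig G s)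

include hτ hmin

lemma rgReplayT (h : Set XM)
    (hmk : ∀ n, 1 ≤ n → n ≤ rgMIdx (rgX G τ) - 1 → mk n ∈ h)
    (hint : ∀ z : ℤ, z ≠ (rgMIdx (rgX G τ) : ℤ) → rgFed G z → ik z ∈ h) :
    ReplaySeq h G (rgX G) := by
  intro t
  by_cases ht2 : t % 2 = 1
  · exact Or.inr (rgReplay_odd G ht2)
  · have ht0 : t % 2 = 0 := by omega
    by_cases htτ : t < τ
    · rcases rgX_even0 G ht0 (by rintro ⟨s, hs, hp⟩; exact hmin s (by omega) hp)
        with he | ⟨-, hf, h1⟩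
      · left
        rw [he]
        have hb := rgBig G hτ hmin (u := t / 2) (by omega)
        exact hmk _ (by omega) (by omega)
      · exact Or.inr (rgReplay_fill G h1 hf)
    · have hττ : τ < t := by have := hτ.1; omega
      rcases rgX_evenT G ht0 hτ hττ hmin with ⟨hnc, he⟩ | ⟨-, hf⟩
      · left
        by_cases hk : (t - τ - 1) / 2 < rgMIdx (rgX G τ) - 1
        · have hp : rgPlan2 τ (rgMIdx (rgX G τ)) t = mk ((t - τ - 1) / 2 + 1) := by
            unfold rgPlan2; rw [if_pos hk]
          rw [he, hp]
          exact hmk _ (by omega) (by omega)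
        · have hp : rgPlan2 τ (rgMIdx (rgX G τ)) t
              = ik (rgEta ((t - τ - 1) / 2 - (rgMIdx (rgX G τ) - 1))) := by
            unfold rgPlan2; rw [if_neg hk]
          rw [he, hp]
          apply hint
          · intro hzz
            exact hnc (Or.inr (by rw [hp, hzz]))
          · exact ⟨t, ht0, by rw [he, hp]⟩
      · exact Or.inr (rgReplay_fill G (by omega) hf)

lemma rgEnum1 : ∀ y ∈ rgH1 G (rgMIdx (rgX G τ)), ∃ t, rgX G t = y := by
  have hm2 := rgM2 G hτ hmin
  rintro y (((h | ⟨z, hzA, rfl⟩) | ⟨z, hz, rfl⟩) | ⟨n, h1n, hnm, rfl⟩)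
  · rw [Set.mem_singleton_iff] at h
    subst h
    have hcast : ((rgMIdx (rgX G τ) - 1 : ℕ) : ℤ) = (rgMIdx (rgX G τ) : ℤ) - 1 := by
      omega
    obtain ⟨r, -, he⟩ := rgAppears_ik G hτ hmin
      (z := ((rgMIdx (rgX G τ) - 1 : ℕ) : ℤ)) (by omega)
    exact ⟨r, he⟩
  · obtain ⟨t, -, he⟩ := hzA
    exact ⟨t, he⟩
  · obtain ⟨r, -, he⟩ := rgAppears_ik G hτ hmin (z := z) (by omega)
    exact ⟨r, he⟩
  · obtain ⟨r, -, he⟩ := rgAppears_mk G hτ hmin h1n hnm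
    exact ⟨r, he⟩

lemma rgEnum2 : ∀ y ∈ rgH2 G (rgMIdx (rgX G τ)), ∃ t, rgX G t = y := by
  have hm2 := rgM2 G hτ hmin
  rintro y ((⟨z, hz, rfl⟩ | ⟨z, ⟨hzm, hzf⟩, rfl⟩) | ⟨n, h1n, hnm, rfl⟩)
  · obtain ⟨r, -, he⟩ := rgAppears_ik G hτ hmin (z := z) (by omega)
    exact ⟨r, he⟩
  · obtain ⟨t, -, he⟩ := hzf
    exact ⟨t, he⟩
  · by_cases hnm' : n = rgMIdx (rgX G τ)
    · subst hnm'
      exact ⟨τ, (rgXτ_eq G hτ).1⟩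
    · obtain ⟨r, -, he⟩ := rgAppears_mk G hτ hmin h1n (by omega)
      exact ⟨r, he⟩

end WithTrigger2

def rgTV (τ m : ℕ) : ℕ := τ + 2 + 2 * m + 2 * ((m - 1) + rgEtaInv ((m : ℤ) - 1))

section WithTrigger3

variable {τ : ℕ} (hτ : rgPtrig G τ) (hmin : ∀ s, s < τ → ¬ rgPtrig G s)

include hτ hmin

lemma rgClaimC {s : ℕ} (hs : rgTV τ (rgMIdx (rgX G τ)) < s) (hs2 : s % 2 = 1) :
    (rgX G s ∉ rgH1 G (rgMIdx (rgX G τ)) ∨ ∃ r, r < s ∧ rgX G r = rgX G s) ∨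
    (rgX G s ∉ rgH2 G (rgMIdx (rgX G τ)) ∨ ∃ r, r < s ∧ rgX G r = rgX G s) := by
  have hm2 := rgM2 G hτ hmin
  by_cases hrep : ∃ r, r < s ∧ rgX G r = rgX G s
  · exact Or.inl (Or.inr hrep)
  have hfresh : ∀ r < s, rgX G r ≠ rgX G s := by
    intro r hr heq
    exact hrep ⟨r, hr, heq⟩
  have hτs : τ < s := by
    have : τ < rgTV τ (rgMIdx (rgX G τ)) := by unfold rgTV; omega
    omega
  by_cases hy1 : rgX G s ∈ rgH1 G (rgMIdx (rgX G τ))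
  · by_cases hy2 : rgX G s ∈ rgH2 G (rgMIdx (rgX G τ))
    · exfalso
      cases hv : rgX G s with
      | inr n =>
          rw [hv] at hy2
          rcases hy2 with ((⟨z', _, he⟩ | ⟨z', _, he⟩) | ⟨n', h1n', hn'm, he⟩)
          · exact absurd he (by simp [ik])
          · exact absurd he (by simp [ik])
          · obtain rfl : n = n' := by simpa [mk] using he
            by_cases hnm : n = rgMIdx (rgX G τ)
            · subst hnm
              refine hfresh τ hτs ?_
              rw [hv]
              exact (rgXτ_eq G hτ).1
            · obtain ⟨r, hrb, he2⟩ := rgAppears_mk G hτ hmin h1n' (by omega)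
              refine hfresh r ?_ ?_
              · have : τ + 1 + 2 * (n - 1) < rgTV τ (rgMIdx (rgX G τ)) := by
                  unfold rgTV; omega
                omega
              · exact he2.trans hv.symm
      | inl z =>
          have hkf := rgNotFed G hτ hmin hs2 (by have := hτ.1; omega) hτs hfresh (z := z) hv
          rw [hv] at hy1 hy2
          have hz2 : z < (rgMIdx (rgX G τ) : ℤ) := by
            rcases hy2 with ((⟨z', hz', he⟩ | ⟨z', ⟨_, hz'f⟩, he⟩) | ⟨n', _, _, he⟩)
            · obtain rfl : z = z' := by simpa [ik] using he
              exact hz'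
            · obtain rfl : z' = z := by simpa [ik] using he
              exact absurd (by obtain ⟨t, ht2, htf⟩ := hz'f; exact hkf t ht2 htf) not_false
            · exact absurd he (by simp [ik, mk])
          rcases hy1 with (((he | ⟨z', hz'A, he⟩) | ⟨z', hz', he⟩) | ⟨n', _, _, he⟩)
          · rw [Set.mem_singleton_iff] at he
            obtain rfl : z = ((rgMIdx (rgX G τ) - 1 : ℕ) : ℤ) := by simpa [ik] using he
            have hcast : ((rgMIdx (rgX G τ) - 1 : ℕ) : ℤ) = (rgMIdx (rgX G τ) : ℤ) - 1 := by
              omega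
            obtain ⟨r, hrb, he2⟩ := rgAppears_ik G hτ hmin
              (z := ((rgMIdx (rgX G τ) - 1 : ℕ) : ℤ)) (by omega)
            refine hfresh r ?_ (he2.trans hv.symm)
            rw [hcast] at hrb
            have : τ + 1 + 2 * ((rgMIdx (rgX G τ) - 1) + rgEtaInv ((rgMIdx (rgX G τ) : ℤ) - 1))
                < rgTV τ (rgMIdx (rgX G τ)) := by unfold rgTV; omega
            omega
          · obtain rfl : z' = z := by simpa [ik] using he
            obtain ⟨t, ht2, htf⟩ := hz'A
            exact hkf t ht2 htf
          · obtain rfl : z = z' := by simpa [ik] using he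
            omega
          · exact absurd he (by simp [ik, mk])
    · exact Or.inr (Or.inl hy2)
  · exact Or.inl (Or.inl hy1)

end WithTrigger3

lemma rgErr (h : Set XM) {s : ℕ} (hs2 : s % 2 = 1)
    (he : rgX G s ∉ h ∨ ∃ r, r < s ∧ rgX G r = rgX G s) :
    ¬ (Out G (rgX G) s ∈ h ∧ ∀ r < s, Out G (rgX G) s ≠ rgX G r) := by
  rw [rgOut_odd G hs2]
  rintro ⟨hin, hfr⟩
  rcases he with h1 | ⟨r, hr, heq⟩
  · exact h1 hin
  · exact hfr r hr heq.symm

instance decRgPtrig : DecidablePred (rgPtrig G) := fun s => by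
  unfold rgPtrig; infer_instance


/-- H is not generatable in the limit with replay: for every generator there is a
target hypothesis and an enumeration with replay on which the generator errs
infinitely often. -/
theorem statement6 :
    ∀ G : List XM → XM, ∃ h ∈ HM, ∃ x : ℕ → XM,
      ReplaySeq h G x ∧ (∀ y ∈ h, ∃ t, x t = y) ∧
      ∀ T : ℕ, ∃ s, T ≤ s ∧ ¬ (Out G x s ∈ h ∧ ∀ r < s, Out G x s ≠ x r) := by
  intro G
  by_cases hex : ∃ s, rgPtrig G s
  · have hτ : rgPtrig G (Nat.find hex) := Nat.find_spec hex
    have hmin : ∀ s, s < Nat.find hex → ¬ rgPtrig G s := fun s hs => Nat.find_min hex hs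
    set τ := Nat.find hex with hτdef
    set m := rgMIdx (rgX G τ) with hmdef
    have hm2 := rgM2 G hτ hmin
    by_cases hB : ∀ T, ∃ s, T ≤ s ∧ s % 2 = 1 ∧
        (rgX G s ∉ rgH2 G m ∨ ∃ r, r < s ∧ rgX G r = rgX G s)
    · refine ⟨rgH2 G m, rgH2_mem G, rgX G, ?_, rgEnum2 G hτ hmin, ?_⟩
      · refine rgReplayT G hτ hmin _ ?_ ?_
        · intro n h1 h2
          exact Or.inr ⟨n, h1, by omega, rfl⟩
        · intro z hzm hzf
          exact Or.inl (Or.inr ⟨z, ⟨hzm, hzf⟩, rfl⟩)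
      · intro T
        obtain ⟨s, hTs, hs2, herr⟩ := hB T
        exact ⟨s, hTs, rgErr G _ hs2 herr⟩
    · push_neg at hB
      obtain ⟨T₀, hT₀⟩ := hB
      refine ⟨rgH1 G m, rgH1_mem G (by omega), rgX G, ?_, rgEnum1 G hτ hmin, ?_⟩
      · refine rgReplayT G hτ hmin _ ?_ ?_
        · intro n h1 h2
          exact Or.inr ⟨n, h1, h2, rfl⟩
        · intro z hzm hzf
          exact Or.inl (Or.inl (Or.inr ⟨z, hzf, rfl⟩))
      · intro T
        refine ⟨2 * (T + T₀ + rgTV τ m) + 1, by omega, ?_⟩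
        have hs2 : (2 * (T + T₀ + rgTV τ m) + 1) % 2 = 1 := by omega
        have hclaim := rgClaimC G hτ hmin (s := 2 * (T + T₀ + rgTV τ m) + 1)
          (by rw [← hmdef]; omega) hs2
        rcases hclaim with h1 | h2
        · exact rgErr G _ hs2 h1
        · exfalso
          have hcon := hT₀ (2 * (T + T₀ + rgTV τ m) + 1) (by omega)
          rw [← hmdef] at h2
          rcases h2 with hnot | ⟨r, hr, heq⟩
          · exact hnot (hcon hs2).1
          · exact (hcon hs2).2 r hr heq
  · push_neg at hex
    refine ⟨allMarkers, Or.inl rfl, rgX G, ?_, ?_, ?_⟩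
    · intro t
      by_cases ht2 : t % 2 = 1
      · exact Or.inr (rgReplay_odd G ht2)
      · rcases rgX_even0 G (t := t) (by omega) (by rintro ⟨s, -, hp⟩; exact hex s hp)
          with he | ⟨-, hf, h1⟩
        · left
          rw [he]
          exact ⟨t / 2 + 1, by omega, rfl⟩
        · exact Or.inr (rgReplay_fill G h1 hf)
    · rintro y ⟨n, h1n, rfl⟩
      obtain ⟨r, -, he⟩ := rgAppears0 G (u := n - 1) (by rintro ⟨s, -, hp⟩; exact hex s hp)
      have hn : n - 1 + 1 = n := by omega
      rw [hn] at he
      exact ⟨r, he⟩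
    · intro T
      refine ⟨2 * T + 1, by omega, ?_⟩
      rw [rgOut_odd G (by omega)]
      rintro ⟨hin, hfr⟩
      refine hex (2 * T + 1) ⟨by omega, ?_, ?_⟩
      · exact rgIsMk_iff.mpr hin
      · intro r hr heq
        exact hfr r hr heq.symm
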